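/- arXiv:1110.1946 — 3 statements merged into one kernel-verified Lean document; each statement's English description precedes it below -/
import Mathlib

section
/- Let W be a finite Coxeter group acting on V = ℂ^n with root system R_+ and Dunkl operators ∇_i with parameter c. Suppose P_1, …, P_n are polynomials with ∇_i P_j = 0 for all i, j, and suppose that for every reflection s_γ ∈ W and all i, s_γ P_i = Σ_j (s_γ)_{ji} P_j where (s_γ)_{ji} is the matrix of s_γ on V in the basis e_i (i.e., the span of the P_i is isomorphic to V via P_i ↦ e_i). Then ∂_{x^i} P_j = ∂_{x^j} P_i for all i, j, and consequently there exists a polynomial Q with ∂_{x^i} Q = P_i for all i; moreover Q is W-invariant. -/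
open MvPolynomial

/-- The linear form L_γ = (γ, x) = Σ_k γ_k x^k as a polynomial. -/
noncomputable def Lform (n : ℕ) (γ : Fin n → ℂ) : MvPolynomial (Fin n) ℂ :=
  ∑ k, C (γ k) * X k

/-- The reflection s_γ acting on polynomials: x^i ↦ x^i − γ_i (γ, x)
(roots normalized by (γ,γ) = 2). -/
noncomputable def reflPoly (n : ℕ) (γ : Fin n → ℂ) :
    MvPolynomial (Fin n) ℂ →ₐ[ℂ] MvPolynomial (Fin n) ℂ :=
  aeval fun i => X i - C (γ i) * ∑ k, C (γ k) * X k

lemma my_coeff_pderiv {n : ℕ} (i : Fin n) (m : Fin n →₀ ℕ) (p : MvPolynomial (Fin n) ℂ) :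
    coeff m (pderiv i p) = (m i + 1 : ℕ) * coeff (m + Finsupp.single i 1) p := by
  induction p using MvPolynomial.induction_on' with
  | add p q hp hq => simp [hp, hq, mul_add]
  | monomial s a =>
    rw [pderiv_monomial, coeff_monomial, coeff_monomial]
    by_cases h : s = m + Finsupp.single i 1
    · subst h
      simp [Finsupp.add_apply, Finsupp.single_apply, mul_comm]
    · rw [if_neg h, mul_zero]
      by_cases h0 : s i = 0
      · by_cases h1 : s - Finsupp.single i 1 = m
        · simp [if_pos h1, h0]
        · simp [if_neg h1]
      · rw [if_neg]
        intro h1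
        apply h
        rw [← h1, tsub_add_cancel_of_le]
        simpa [Finsupp.single_le_iff, Nat.one_le_iff_ne_zero] using h0

lemma my_euler_coeff {n : ℕ} (m : Fin n →₀ ℕ) (p : MvPolynomial (Fin n) ℂ) :
    coeff m (∑ j, X j * pderiv j p) = (∑ j, m j : ℕ) * coeff m p := by
  classical
  rw [coeff_sum, Nat.cast_sum, Finset.sum_mul]
  apply Finset.sum_congr rfl
  intro j _
  rw [coeff_X_mul']
  by_cases h : j ∈ m.support
  · rw [if_pos h, my_coeff_pderiv]
    have h1 : 1 ≤ m j := Nat.one_le_iff_ne_zero.2 (Finsupp.mem_support_iff.1 h)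
    rw [tsub_add_cancel_of_le (by simpa [Finsupp.single_le_iff] using h1)]
    congr 2
    rw [Finsupp.tsub_apply, Finsupp.single_apply, if_pos rfl]
    omega
  · rw [if_neg h]
    have : m j = 0 := by simpa using h
    simp [this]

lemma my_pderiv_aeval {n : ℕ} (g : Fin n → MvPolynomial (Fin n) ℂ) (i : Fin n)
    (p : MvPolynomial (Fin n) ℂ) :
    pderiv i (aeval g p) = ∑ j, aeval g (pderiv j p) * pderiv i (g j) := by
  induction p using MvPolynomial.induction_on with
  | C a => simp
  | add p q hp hq => simp only [map_add, hp, hq, ← Finset.sum_add_distrib, add_mul]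
  | mul_X p j hp =>
    simp only [map_mul, aeval_X, pderiv_mul, hp, map_add, add_mul, Finset.sum_mul]
    rw [Finset.sum_add_distrib]
    refine congrArg₂ (· + ·) ?_ ?_
    · apply Finset.sum_congr rfl; intro k _; ring
    · rw [Finset.sum_eq_single j]
      · simp
      · intro k _ hk
        simp [pderiv_X_of_ne (Ne.symm hk)]
      · simp

lemma my_constCoeff_refl {n : ℕ} (γ : Fin n → ℂ) (p : MvPolynomial (Fin n) ℂ) :
    constantCoeff (reflPoly n γ p) = constantCoeff p := by
  have h : (constantCoeff (R := ℂ) (σ := Fin n)).comp (reflPoly n γ).toRingHom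
      = constantCoeff := by
    apply MvPolynomial.ringHom_ext
    · intro a; simp [reflPoly]
    · intro i; simp [reflPoly]
  exact RingHom.congr_fun h p

lemma my_eq_of_pderiv {n : ℕ} (p q : MvPolynomial (Fin n) ℂ)
    (h : ∀ i, pderiv i p = pderiv i q) (h0 : constantCoeff p = constantCoeff q) : p = q := by
  ext m
  by_cases hm : m = 0
  · subst hm; exact h0
  · obtain ⟨i, hi⟩ := Finsupp.ne_iff.1 hm
    simp only [Finsupp.coe_zero, Pi.zero_apply] at hi
    have h1 : 1 ≤ m i := Nat.one_le_iff_ne_zero.2 hi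
    have hle : Finsupp.single i 1 ≤ m := by simpa [Finsupp.single_le_iff] using h1
    have := congrArg (coeff (m - Finsupp.single i 1)) (h i)
    rw [my_coeff_pderiv, my_coeff_pderiv, tsub_add_cancel_of_le hle] at this
    have hne : ∀ k : ℕ, ((k + 1 : ℕ) : ℂ) ≠ 0 := fun k => by
      exact_mod_cast Nat.succ_ne_zero k
    exact mul_left_cancel₀ (hne _) this

set_option maxHeartbeats 1000000 in
/-- If ∇_i P_j = 0 for all i,j (stated with denominators cleared) and the span of the
P_i is a copy of the reflection representation (s_γ P_i = P_i − γ_i Σ_j γ_j P_j), then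
∂_i P_j = ∂_j P_i, and there is a W-invariant polynomial Q with ∂_i Q = P_i. -/
theorem stmt5 (n : ℕ) (c : ℂ) (R : Finset (Fin n → ℂ))
    (hnorm : ∀ γ ∈ R, ∑ k, γ k * γ k = 2)
    (P : Fin n → MvPolynomial (Fin n) ℂ)
    (hDunkl : ∀ i j : Fin n,
      (∏ γ ∈ R, Lform n γ) * pderiv i (P j) =
        C c * ∑ γ ∈ R, C (γ i) * (P j - reflPoly n γ (P j)) *
          ∏ γ' ∈ R.erase γ, Lform n γ')
    (hEquiv : ∀ γ ∈ R, ∀ i : Fin n,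
      reflPoly n γ (P i) = P i - C (γ i) * ∑ j, C (γ j) * P j) :
    (∀ i j : Fin n, pderiv i (P j) = pderiv j (P i)) ∧
    ∃ Q : MvPolynomial (Fin n) ℂ,
      (∀ i, pderiv i Q = P i) ∧ ∀ γ ∈ R, reflPoly n γ Q = Q := by
  classical
  -- the product of linear forms is nonzero
  have hLne : ∀ γ ∈ R, Lform n γ ≠ 0 := by
    intro γ hγ
    have h2 := hnorm γ hγ
    have : ∃ k, γ k ≠ 0 := by
      by_contra h
      push_neg at h
      simp [h] at h2
    obtain ⟨k, hk⟩ := this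
    intro h0
    apply hk
    have := congrArg (coeff (Finsupp.single k 1)) h0
    simpa [Lform, coeff_sum, coeff_C_mul, coeff_X', Finsupp.single_left_inj] using this
  have hprod : (∏ γ ∈ R, Lform n γ) ≠ 0 := Finset.prod_ne_zero_iff.2 hLne
  -- part 1: symmetry of partial derivatives
  have part1 : ∀ i j : Fin n, pderiv i (P j) = pderiv j (P i) := by
    intro i j
    apply mul_left_cancel₀ hprod
    rw [hDunkl i j, hDunkl j i]
    apply congrArg (C c * ·)
    apply Finset.sum_congr rfl
    intro γ hγ
    rw [hEquiv γ hγ i, hEquiv γ hγ j]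
    ring
  refine ⟨part1, ?_⟩
  -- construct Q by "integrating" F = ∑ x_i P_i
  set F : MvPolynomial (Fin n) ℂ := ∑ i, X i * P i with hF
  set Q : MvPolynomial (Fin n) ℂ :=
    ∑ m ∈ F.support, monomial m (coeff m F / ((∑ j, m j : ℕ) : ℂ)) with hQdef
  have hcoeffQ : ∀ m, coeff m Q = coeff m F / ((∑ j, m j : ℕ) : ℂ) := by
    intro m
    rw [hQdef, coeff_sum]
    simp_rw [coeff_monomial]
    rw [Finset.sum_ite_eq' F.support m]
    by_cases h : m ∈ F.support
    · rw [if_pos h]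
    · rw [if_neg h]
      rw [MvPolynomial.notMem_support_iff.1 h, zero_div]
  have hpF : ∀ j, pderiv j F = P j + ∑ i, X i * pderiv i (P j) := by
    intro j
    rw [hF, map_sum]
    simp_rw [pderiv_mul]
    rw [Finset.sum_add_distrib]
    refine congrArg₂ (· + ·) ?_ ?_
    · rw [Finset.sum_eq_single j]
      · simp
      · intro k _ hk
        simp [pderiv_X_of_ne hk]
      · simp
    · exact Finset.sum_congr rfl fun i _ => by rw [part1 j i]
  have hQ : ∀ j, pderiv j Q = P j := by
    intro j
    ext m
    rw [my_coeff_pderiv, hcoeffQ]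
    have hdeg : (∑ i : Fin n, (m + Finsupp.single j 1 : Fin n →₀ ℕ) i) = (∑ i, m i) + 1 := by
      simp_rw [Finsupp.add_apply]
      rw [Finset.sum_add_distrib]
      congr 1
      simp [Finsupp.single_apply]
    rw [hdeg]
    have key : ((m j + 1 : ℕ) : ℂ) * coeff (m + Finsupp.single j 1) F
        = (((∑ i : Fin n, m i) + 1 : ℕ) : ℂ) * coeff m (P j) := by
      rw [← my_coeff_pderiv, hpF j, coeff_add, my_euler_coeff]
      push_cast
      ring
    have hne : ∀ k : ℕ, ((k + 1 : ℕ) : ℂ) ≠ 0 := fun k => by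
      exact_mod_cast Nat.succ_ne_zero k
    rw [← mul_div_assoc, div_eq_iff (hne (∑ i : Fin n, m i))]
    linear_combination key
  refine ⟨Q, hQ, ?_⟩
  -- invariance of Q
  intro γ hγ
  set g : Fin n → MvPolynomial (Fin n) ℂ :=
    fun i => X i - C (γ i) * ∑ k, C (γ k) * X k with hgdef
  set S : MvPolynomial (Fin n) ℂ := ∑ k, C (γ k) * P k with hSdef
  have haeq : ∀ j : Fin n, aeval g (P j) = P j - C (γ j) * S := fun j => hEquiv γ hγ j
  have hsum2 : (∑ j, C (γ j) * C (γ j) : MvPolynomial (Fin n) ℂ) = 2 := by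
    have : (∑ j, C (γ j) * C (γ j) : MvPolynomial (Fin n) ℂ) = C 2 := by
      rw [← hnorm γ hγ]; simp [map_sum]
    rw [this]; exact map_ofNat C 2
  apply my_eq_of_pderiv
  · intro i
    show pderiv i (aeval g Q) = pderiv i Q
    have hg : ∀ j : Fin n, pderiv i (g j) = pderiv i (X j) - C (γ j) * C (γ i) := by
      intro j
      rw [hgdef]
      rw [map_sub, pderiv_C_mul, map_sum]
      congr 1
      congr 1
      rw [Finset.sum_eq_single i]
      · simp
      · intro k _ hk; simp [pderiv_X_of_ne hk]
      · simp
    have hstep : pderiv i (aeval g Q) =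
        (∑ j, aeval g (P j) * pderiv i (X j)) - ∑ j, aeval g (P j) * (C (γ j) * C (γ i)) := by
      rw [my_pderiv_aeval, ← Finset.sum_sub_distrib]
      apply Finset.sum_congr rfl
      intro j _
      rw [hQ j, hg j]
      ring
    have hfirst : ∑ j, aeval g (P j) * pderiv i (X j) = aeval g (P i) := by
      rw [Finset.sum_eq_single i]
      · simp
      · intro k _ hk; simp [pderiv_X_of_ne hk]
      · simp
    have hsecond : ∑ j, aeval g (P j) * (C (γ j) * C (γ i)) = - (C (γ i) * S) := by
      calc ∑ j, aeval g (P j) * (C (γ j) * C (γ i))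
          = ∑ j, (P j - C (γ j) * S) * (C (γ j) * C (γ i)) := by simp_rw [haeq]
        _ = (∑ j, C (γ j) * P j) * C (γ i)
              - (∑ j, C (γ j) * C (γ j)) * S * C (γ i) := by
            simp_rw [sub_mul, Finset.sum_sub_distrib, Finset.sum_mul]
            refine congrArg₂ (· - ·) ?_ ?_ <;> exact Finset.sum_congr rfl fun j _ => by ring
        _ = S * C (γ i) - 2 * S * C (γ i) := by rw [hsum2, ← hSdef]
        _ = - (C (γ i) * S) := by ring
    rw [hstep, hfirst, hsecond, haeq i, hQ i]
    ring
  · exact my_constCoeff_refl γ Q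
end

section
/- Let W be a finite Coxeter group on V = ℂ^n with positive roots R_+ ((γ,γ)=2), Dunkl operators ∇_i with parameter c = ν, and C*^k_{ij}(x) = Σ_{γ∈R_+} γ_i γ_j γ_k/(γ,x). If p is a W-invariant polynomial satisfying ∂²p/∂x^i∂x^j = ν C*^k_{ij} ∂p/∂x^k for all i,j (as rational functions, i.e. after clearing denominators as polynomial identities), then for every j the polynomial v_j = ∂_{x^j} p satisfies ∇_i v_j = 0 for all i. -/
open MvPolynomial

/-- Chain rule for `aeval` on multivariate polynomials over a finite index type. -/
lemma pderiv_aeval_chain (n : ℕ) (f : Fin n → MvPolynomial (Fin n) ℂ) (j : Fin n)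
    (q : MvPolynomial (Fin n) ℂ) :
    pderiv j (aeval f q) = ∑ k, aeval f (pderiv k q) * pderiv j (f k) := by
  induction q using MvPolynomial.induction_on with
  | C a => simp
  | add q r hq hr =>
      simp only [map_add, hq, hr, add_mul, Finset.sum_add_distrib]
  | mul_X q i hq =>
      have hterm : ∀ k : Fin n,
          aeval f (pderiv k (q * X i)) * pderiv j (f k)
            = aeval f (pderiv k q) * pderiv j (f k) * f i
              + (if i = k then aeval f q * pderiv j (f k) else 0) := by
        intro k
        rw [pderiv_mul, pderiv_X, map_add, map_mul, map_mul, aeval_X, Pi.single_apply]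
        by_cases h : i = k
        · subst h; simp only [eq_self_iff_true, if_true, map_one]; ring
        · simp only [if_neg h, if_neg (fun h' => h h'), map_zero]; ring
      rw [Finset.sum_congr rfl fun k _ => hterm k, Finset.sum_add_distrib,
        Finset.sum_ite_eq Finset.univ i]
      simp only [map_mul, aeval_X, pderiv_mul, hq, Finset.mem_univ, if_true]
      rw [Finset.sum_mul]

lemma pderiv_reflPoly (n : ℕ) (γ : Fin n → ℂ) (j : Fin n) (q : MvPolynomial (Fin n) ℂ) :
    pderiv j (reflPoly n γ q)
      = reflPoly n γ (pderiv j q)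
        - C (γ j) * ∑ k, C (γ k) * reflPoly n γ (pderiv k q) := by
  show pderiv j (aeval _ q) = _
  rw [pderiv_aeval_chain]
  have hL : pderiv j (∑ m, C (γ m) * X m) = C (γ j) := by
    rw [map_sum, Finset.sum_eq_single j]
    · simp
    · intro m _ hm; simp [Pi.single_eq_of_ne hm]
    · simp
  have hd : ∀ k : Fin n, pderiv j ((X k : MvPolynomial (Fin n) ℂ)
        - C (γ k) * ∑ m, C (γ m) * X m)
      = (if k = j then (1 : MvPolynomial (Fin n) ℂ) else 0) - C (γ k) * C (γ j) := by
    intro k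
    rw [map_sub, pderiv_X, pderiv_mul, hL]
    simp [Pi.single_apply]
  have hterm : ∀ k : Fin n,
      (aeval (fun i => X i - C (γ i) * ∑ m, C (γ m) * X m)) (pderiv k q) *
          pderiv j ((X k : MvPolynomial (Fin n) ℂ) - C (γ k) * ∑ m, C (γ m) * X m)
        = (if k = j then reflPoly n γ (pderiv k q) else 0)
          - C (γ j) * (C (γ k) * reflPoly n γ (pderiv k q)) := by
    intro k
    rw [hd k]
    show reflPoly n γ (pderiv k q) * _ = _
    split <;> ring
  rw [Finset.sum_congr rfl fun k _ => hterm k, Finset.sum_sub_distrib,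
    Finset.sum_ite_eq' Finset.univ j, Finset.mul_sum]
  simp

/-- Proposition 2.4: if a W-invariant polynomial p satisfies
∂²p/∂x^i∂x^j = ν C*^k_{ij} ∂p/∂x^k (denominators cleared), then each v_j = ∂_{x^j}p is
singular: ∇_i v_j = 0 (denominators cleared) for the Dunkl operators with c = ν. -/
theorem stmt13 (n : ℕ) (ν : ℂ) (R : Finset (Fin n → ℂ))
    (hnorm : ∀ γ ∈ R, ∑ k, γ k * γ k = 2)
    (p : MvPolynomial (Fin n) ℂ)
    (hinv : ∀ γ ∈ R, reflPoly n γ p = p)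
    (hsys : ∀ i j : Fin n,
      (∏ γ ∈ R, Lform n γ) * pderiv i (pderiv j p)
        = C ν * ∑ γ ∈ R, C (γ i * γ j) * (∑ k, C (γ k) * pderiv k p) *
            ∏ γ' ∈ R.erase γ, Lform n γ') :
    ∀ i j : Fin n,
      (∏ γ ∈ R, Lform n γ) * pderiv i (pderiv j p)
        = C ν * ∑ γ ∈ R, C (γ i) * (pderiv j p - reflPoly n γ (pderiv j p)) *
            ∏ γ' ∈ R.erase γ, Lform n γ' := by
  intro i j
  rw [hsys i j]
  congr 1
  apply Finset.sum_congr rfl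
  intro γ hγ
  congr 1
  set D : MvPolynomial (Fin n) ℂ := ∑ k, C (γ k) * pderiv k p with hD
  set D' : MvPolynomial (Fin n) ℂ := ∑ k, C (γ k) * reflPoly n γ (pderiv k p) with hD'
  have hbase : ∀ j' : Fin n, pderiv j' p
      = reflPoly n γ (pderiv j' p) - C (γ j') * D' := by
    intro j'
    conv_lhs => rw [← hinv γ hγ]
    exact pderiv_reflPoly n γ j' p
  have hsub : ∀ j' : Fin n,
      pderiv j' p - reflPoly n γ (pderiv j' p) = -(C (γ j') * D') := by
    intro j'
    linear_combination hbase j'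
  have hC : (∑ k, C (γ k) * C (γ k) : MvPolynomial (Fin n) ℂ) = C 2 := by
    rw [← hnorm γ hγ, map_sum]
    exact Finset.sum_congr rfl fun k _ => (C_mul).symm
  have hDD : D - D' = -(C 2 * D') := by
    rw [hD, hD', ← hC, Finset.sum_mul, ← Finset.sum_sub_distrib, ← Finset.sum_neg_distrib]
    refine Finset.sum_congr rfl fun k _ => ?_
    linear_combination C (γ k) * hsub k
  have h2 : (C (2 : ℂ) : MvPolynomial (Fin n) ℂ) = 2 := by
    rw [map_ofNat]
  have hDneg : D = -D' := by
    linear_combination hDD - D' * h2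
  have hkey : pderiv j p - reflPoly n γ (pderiv j p) = C (γ j) * D := by
    linear_combination hsub j - C (γ j) * hDneg
  rw [hkey, C_mul]
  ring
end

section
/- Let ℓ ≥ 2, ω a primitive ℓ-th root of unity, 1 ≤ q ≤ ℓ−1, and let f_1,…,f_n be the polynomials f_j = (−1)^m Σ_{k_1+⋯+k_n=m} C(ν−1,k_j) x_j^{ℓ(m−k_j)+s} ∏_{i≠j} C(ν,k_i) x_i^{ℓ(m−k_i)+ℓ−q+s} with ν = m + (ℓ−q+s)/ℓ, m,s ∈ ℤ_{≥0}. Then under the generators of G(ℓ,1,n) = S_n ⋉ (ℤ/ℓℤ)^n: the reflection σ_{ij}^{(a)} (which sends x_i ↦ ω^a x_j, x_j ↦ ω^{−a} x_i, fixing other variables) acts by σ_{ij}^{(a)} f_i = ω^{a q} f_j, σ_{ij}^{(a)} f_j = ω^{−a q} f_i, σ_{ij}^{(a)} f_k = f_k (k ≠ i,j); and s_i (which sends x_i ↦ ω⁻¹ x_i in the polynomial action, i.e. (s_i f)(x) = f(s_i^{−1} x)) acts by s_i f_i = ω^{−s} f_i and s_i f_k = ω^{q−s} f_k for k ≠ i.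 -/
open MvPolynomial

/-- Generalized binomial coefficient C(α,k) = α(α−1)⋯(α−k+1)/k!. -/
noncomputable def cbinom (α : ℂ) (k : ℕ) : ℂ :=
  (∏ i ∈ Finset.range k, (α - i)) / (k.factorial : ℂ)

/-- The residue polynomial f_j for G(ℓ,1,n), ν = m + (ℓ−q+s)/ℓ. -/
noncomputable def fjPoly (ℓ n m s q : ℕ) (j : Fin n) : MvPolynomial (Fin n) ℂ :=
  ∑ k ∈ (Fintype.piFinset fun _ : Fin n => Finset.range (m + 1)).filter
      (fun k => ∑ i, k i = m),
    MvPolynomial.monomial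
      (Finsupp.equivFunOnFinite.symm fun i =>
        if i = j then ℓ * (m - k i) + s else ℓ * (m - k i) + (ℓ - q) + s)
      ((-1 : ℂ) ^ m * cbinom (((m : ℂ) + ((ℓ : ℂ) - q + s) / ℓ) - 1) (k j) *
        ∏ i ∈ Finset.univ.erase j, cbinom ((m : ℂ) + ((ℓ : ℂ) - q + s) / ℓ) (k i))

lemma aeval_monomial_scale_perm {n : ℕ} (u : Fin n → ℂ) (π : Equiv.Perm (Fin n))
    (e : Fin n → ℕ) (c : ℂ) :
    aeval (fun l : Fin n => C (u l) * X (π l)) (monomial (Finsupp.equivFunOnFinite.symm e) c)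
      = monomial (Finsupp.equivFunOnFinite.symm (e ∘ π.symm)) (c * ∏ l, u l ^ e l) := by
  rw [aeval_monomial, Finsupp.prod_fintype _ _ (fun _ => pow_zero _)]
  simp only [Finsupp.coe_equivFunOnFinite_symm]
  have h1 : ∀ l : Fin n, ((C (u l) * X (π l) : MvPolynomial (Fin n) ℂ)) ^ e l
      = C (u l ^ e l) * X (π l) ^ e l := fun l => by rw [mul_pow, C_pow]
  simp_rw [h1]
  rw [Finset.prod_mul_distrib, ← map_prod]
  have h2 : (∏ l, (X (π l) : MvPolynomial (Fin n) ℂ) ^ e l)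
      = ∏ l, (X l : MvPolynomial (Fin n) ℂ) ^ (e (π.symm l)) := by
    rw [← Equiv.prod_comp π (fun l => (X l : MvPolynomial (Fin n) ℂ) ^ e (π.symm l))]
    simp
  have h3 : (∏ l, (X l : MvPolynomial (Fin n) ℂ) ^ (e (π.symm l)))
      = monomial (Finsupp.equivFunOnFinite.symm (e ∘ π.symm)) 1 := by
    rw [monomial_eq, Finsupp.prod_fintype _ _ (fun _ => pow_zero _)]
    simp [Function.comp]
  rw [h2, h3, algebraMap_eq, ← mul_assoc, ← C_mul, C_mul_monomial, mul_one]

lemma prod_if_two {n : ℕ} (i j : Fin n) (hij : i ≠ j) (b c : ℂ) (e : Fin n → ℕ) :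
    ∏ l, (if l = i then b else if l = j then c else 1) ^ e l = b ^ e i * c ^ e j := by
  rw [← Finset.prod_subset (Finset.subset_univ ({i, j} : Finset (Fin n)))
    (fun x _ hx => by
      simp only [Finset.mem_insert, Finset.mem_singleton, not_or] at hx
      simp [hx.1, hx.2])]
  rw [Finset.prod_pair hij]
  simp [hij, Ne.symm hij]

lemma prod_if_one {n : ℕ} (i : Fin n) (b : ℂ) (e : Fin n → ℕ) :
    ∏ l, (if l = i then b else 1) ^ e l = b ^ e i := by
  rw [← Finset.prod_subset (Finset.subset_univ ({i} : Finset (Fin n)))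
    (fun x _ hx => by
      simp only [Finset.mem_singleton] at hx
      simp [hx])]
  simp

lemma zpow_congr_mod {ℓ : ℕ} (ω : ℂ) (hω : ω ^ ℓ = 1) (hω0 : ω ≠ 0) (x y : ℤ)
    (h : (ℓ : ℤ) ∣ (x - y)) : ω ^ x = ω ^ y := by
  obtain ⟨c, hc⟩ := h
  have hx : x = y + ℓ * c := by linarith
  rw [hx, zpow_add₀ hω0, zpow_mul, zpow_natCast, hω, one_zpow, mul_one]

lemma pow_to_zpow (ω : ℂ) (e : ℕ) : ω ^ e = ω ^ (e : ℤ) := (zpow_natCast ω e).symm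

lemma inv_pow_to_zpow (ω : ℂ) (e : ℕ) : (ω⁻¹) ^ e = ω ^ (-(e : ℤ)) := by
  rw [zpow_neg, zpow_natCast, inv_pow]

def swapEquiv {n : ℕ} (i j : Fin n) : (Fin n → ℕ) ≃ (Fin n → ℕ) where
  toFun k := k ∘ Equiv.swap i j
  invFun k := k ∘ Equiv.swap i j
  left_inv k := by funext l; simp
  right_inv k := by funext l; simp

lemma swapEquiv_mem {n m : ℕ} (i j : Fin n) (k : Fin n → ℕ) :
    k ∈ (Fintype.piFinset fun _ : Fin n => Finset.range (m + 1)).filter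
      (fun k => ∑ i, k i = m) ↔ swapEquiv i j k ∈ (Fintype.piFinset fun _ : Fin n => Finset.range (m + 1)).filter
      (fun k => ∑ i, k i = m) := by
  simp only [Finset.mem_filter, Fintype.mem_piFinset, swapEquiv, Equiv.coe_fn_mk,
    Function.comp_apply]
  constructor
  · rintro ⟨h1, h2⟩
    exact ⟨fun l => h1 _, by rw [Equiv.sum_comp (Equiv.swap i j) k]; exact h2⟩
  · rintro ⟨h1, h2⟩
    refine ⟨fun l => by simpa using h1 (Equiv.swap i j l), ?_⟩
    rw [← Equiv.sum_comp (Equiv.swap i j) k]; exact h2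

lemma prod_erase_swap {n : ℕ} (i j t : Fin n) (g : Fin n → ℂ) :
    ∏ l ∈ Finset.univ.erase t, g (Equiv.swap i j l)
      = ∏ l ∈ Finset.univ.erase (Equiv.swap i j t), g l := by
  apply Finset.prod_equiv (Equiv.swap i j)
  · intro l
    simp [Finset.mem_erase, (Equiv.swap i j).injective.ne_iff]
  · intros; rfl

lemma scalar_sigma1 {ℓ q a : ℕ} (ω : ℂ) (hωℓ : ω ^ ℓ = 1) (hω0 : ω ≠ 0) (hqℓ : q ≤ ℓ)
    (A B s : ℕ) :
    (ω ^ a) ^ (ℓ * A + s) * ((ω⁻¹) ^ a) ^ (ℓ * B + (ℓ - q) + s) = ω ^ (a * q) := by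
  rw [← pow_mul, ← pow_mul, pow_to_zpow, inv_pow_to_zpow, pow_to_zpow,
    ← zpow_add₀ hω0]
  apply zpow_congr_mod ω hωℓ hω0
  refine ⟨a * ((A : ℤ) - B - 1), ?_⟩
  have h : ((ℓ - q : ℕ) : ℤ) = (ℓ : ℤ) - q := by omega
  push_cast [h]
  ring

lemma scalar_sigma2 {ℓ q a : ℕ} (ω : ℂ) (hωℓ : ω ^ ℓ = 1) (hω0 : ω ≠ 0) (hqℓ : q ≤ ℓ)
    (A B s : ℕ) :
    (ω ^ a) ^ (ℓ * A + (ℓ - q) + s) * ((ω⁻¹) ^ a) ^ (ℓ * B + s) = (ω⁻¹) ^ (a * q) := by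
  rw [← pow_mul, ← pow_mul, pow_to_zpow, inv_pow_to_zpow, inv_pow_to_zpow,
    ← zpow_add₀ hω0]
  apply zpow_congr_mod ω hωℓ hω0
  refine ⟨a * ((A : ℤ) - B + 1), ?_⟩
  have h : ((ℓ - q : ℕ) : ℤ) = (ℓ : ℤ) - q := by omega
  push_cast [h]
  ring

lemma scalar_sigma3 {ℓ q a : ℕ} (ω : ℂ) (hωℓ : ω ^ ℓ = 1) (hω0 : ω ≠ 0)
    (A B s : ℕ) :
    (ω ^ a) ^ (ℓ * A + (ℓ - q) + s) * ((ω⁻¹) ^ a) ^ (ℓ * B + (ℓ - q) + s) = 1 := by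
  rw [← pow_mul, ← pow_mul, pow_to_zpow, inv_pow_to_zpow,
    ← zpow_add₀ hω0, ← zpow_zero ω]
  apply zpow_congr_mod ω hωℓ hω0
  refine ⟨a * ((A : ℤ) - B), ?_⟩
  push_cast
  ring

lemma scalar_si_i {ℓ : ℕ} (ω : ℂ) (hωℓ : ω ^ ℓ = 1) (hω0 : ω ≠ 0) (A s : ℕ) :
    (ω⁻¹) ^ (ℓ * A + s) = (ω⁻¹) ^ s := by
  rw [inv_pow_to_zpow, inv_pow_to_zpow]
  apply zpow_congr_mod ω hωℓ hω0
  refine ⟨-(A : ℤ), ?_⟩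
  push_cast
  ring

lemma scalar_si_k {ℓ q : ℕ} (ω : ℂ) (hωℓ : ω ^ ℓ = 1) (hω0 : ω ≠ 0) (hqℓ : q ≤ ℓ)
    (A s : ℕ) :
    (ω⁻¹) ^ (ℓ * A + (ℓ - q) + s) = ω ^ ((q : ℤ) - (s : ℤ)) := by
  rw [inv_pow_to_zpow]
  apply zpow_congr_mod ω hωℓ hω0
  refine ⟨-((A : ℤ) + 1), ?_⟩
  have h : ((ℓ - q : ℕ) : ℤ) = (ℓ : ℤ) - q := by omega
  push_cast [h]
  ring

lemma E_swap {n : ℕ} (ℓ m s q : ℕ) (i j : Fin n) (k : Fin n → ℕ) :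
    (fun l => if l = i then ℓ * (m - k l) + s else ℓ * (m - k l) + (ℓ - q) + s)
        ∘ ⇑(Equiv.swap i j).symm
      = fun l => if l = j then ℓ * (m - (k ∘ ⇑(Equiv.swap i j)) l) + s
          else ℓ * (m - (k ∘ ⇑(Equiv.swap i j)) l) + (ℓ - q) + s := by
  funext l
  simp only [Function.comp_apply, Equiv.symm_swap]
  rcases eq_or_ne l j with h | h
  · subst h
    simp [Equiv.swap_apply_right]
  · have hs : Equiv.swap i j l ≠ i := by
      rw [Ne, Equiv.swap_apply_eq_iff, Equiv.swap_apply_left]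
      exact h
    simp [hs, h]

lemma E_swap_k {n : ℕ} (ℓ m s q : ℕ) (i j t : Fin n) (hti : t ≠ i) (htj : t ≠ j)
    (k : Fin n → ℕ) :
    (fun l => if l = t then ℓ * (m - k l) + s else ℓ * (m - k l) + (ℓ - q) + s)
        ∘ ⇑(Equiv.swap i j).symm
      = fun l => if l = t then ℓ * (m - (k ∘ ⇑(Equiv.swap i j)) l) + s
          else ℓ * (m - (k ∘ ⇑(Equiv.swap i j)) l) + (ℓ - q) + s := by
  funext l
  simp only [Function.comp_apply, Equiv.symm_swap]
  have ht : Equiv.swap i j t = t := Equiv.swap_apply_of_ne_of_ne hti htj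
  rcases eq_or_ne l t with h | h
  · subst h
    simp [ht]
  · have hs : Equiv.swap i j l ≠ t := by
      rw [Ne, ← ht]
      exact fun hc => h ((Equiv.swap i j).injective hc)
    simp [hs, h]

/-- Action of the generators of G(ℓ,1,n) = S_n ⋉ (ℤ/ℓℤ)^n on the polynomials f_j:
σ_{ij}^{(a)} f_i = ω^{aq} f_j, σ_{ij}^{(a)} f_j = ω^{−aq} f_i, σ_{ij}^{(a)} f_k = f_k,
s_i f_i = ω^{−s} f_i, s_i f_k = ω^{q−s} f_k (k ≠ i, j). -/
theorem stmt16 (ℓ n m s q : ℕ) (hℓ : 2 ≤ ℓ) (ω : ℂ) (hω : IsPrimitiveRoot ω ℓ)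
    (hq1 : 1 ≤ q) (hq2 : q ≤ ℓ - 1) (a : ℕ)
    (i j k : Fin n) (hij : i ≠ j) (hki : k ≠ i) (hkj : k ≠ j) :
    (aeval (fun l : Fin n => if l = i then C (ω ^ a) * X j
        else if l = j then C ((ω⁻¹) ^ a) * X i else X l)
        (fjPoly ℓ n m s q i) = C (ω ^ (a * q)) * fjPoly ℓ n m s q j) ∧
    (aeval (fun l : Fin n => if l = i then C (ω ^ a) * X j
        else if l = j then C ((ω⁻¹) ^ a) * X i else X l)
        (fjPoly ℓ n m s q j) = C ((ω⁻¹) ^ (a * q)) * fjPoly ℓ n m s q i) ∧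
    (aeval (fun l : Fin n => if l = i then C (ω ^ a) * X j
        else if l = j then C ((ω⁻¹) ^ a) * X i else X l)
        (fjPoly ℓ n m s q k) = fjPoly ℓ n m s q k) ∧
    (aeval (fun l : Fin n => if l = i then C ω⁻¹ * X i else X l)
        (fjPoly ℓ n m s q i) = C ((ω⁻¹) ^ s) * fjPoly ℓ n m s q i) ∧
    (aeval (fun l : Fin n => if l = i then C ω⁻¹ * X i else X l)
        (fjPoly ℓ n m s q k) = C (ω ^ ((q : ℤ) - (s : ℤ))) * fjPoly ℓ n m s q k) := by
  have hωℓ : ω ^ ℓ = 1 := hω.pow_eq_one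
  have hω0 : ω ≠ 0 := by
    intro h
    rw [h, zero_pow (by omega)] at hωℓ
    exact zero_ne_one hωℓ
  have hqℓ : q ≤ ℓ := by omega
  have hfunσ : (fun l : Fin n => if l = i then C (ω ^ a) * X j
      else if l = j then C ((ω⁻¹) ^ a) * X i else X l)
      = fun l : Fin n => C ((fun l => if l = i then ω ^ a else if l = j then (ω⁻¹) ^ a
          else 1) l) * X ((Equiv.swap i j) l) := by
    funext l
    rcases eq_or_ne l i with h | h
    · subst h; simp [Equiv.swap_apply_left]
    · rcases eq_or_ne l j with h' | h'
      · subst h'; simp [h, Equiv.swap_apply_right]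
      · simp [h, h', Equiv.swap_apply_of_ne_of_ne h h']
  have hfunτ : (fun l : Fin n => if l = i then C ω⁻¹ * X i else X l)
      = fun l : Fin n => C ((fun l => if l = i then ω⁻¹ else 1) l)
          * X ((Equiv.refl (Fin n)) l) := by
    funext l
    rcases eq_or_ne l i with h | h
    · subst h; simp
    · simp [h]
  refine ⟨?_, ?_, ?_, ?_, ?_⟩
  · -- σ f_i = ω^{aq} f_j
    rw [hfunσ, fjPoly, fjPoly, map_sum, Finset.mul_sum]
    simp only [aeval_monomial_scale_perm, C_mul_monomial]
    refine Finset.sum_equiv (swapEquiv i j) (fun kk => swapEquiv_mem i j kk) ?_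
    intro kk hkk
    rw [prod_if_two i j hij]
    simp only [swapEquiv, Equiv.coe_fn_mk]
    simp only [eq_self_iff_true, if_true]
    rw [if_neg (Ne.symm hij), scalar_sigma1 ω hωℓ hω0 hqℓ]
    congr 1
    · exact congrArg monomial (congrArg Finsupp.equivFunOnFinite.symm (E_swap ℓ m s q i j kk))
    · rw [Function.comp_apply, Equiv.swap_apply_right]
      rw [show (∏ l ∈ Finset.univ.erase j,
          cbinom ((m : ℂ) + ((ℓ : ℂ) - q + s) / ℓ) ((kk ∘ ⇑(Equiv.swap i j)) l))
        = ∏ l ∈ Finset.univ.erase (Equiv.swap i j j),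
          cbinom ((m : ℂ) + ((ℓ : ℂ) - q + s) / ℓ) (kk l) from
        prod_erase_swap i j j (fun l => cbinom ((m : ℂ) + ((ℓ : ℂ) - q + s) / ℓ) (kk l)),
        Equiv.swap_apply_right]
      ring
  · -- σ f_j = ω^{-aq} f_i
    rw [hfunσ, fjPoly, fjPoly, map_sum, Finset.mul_sum]
    simp only [aeval_monomial_scale_perm, C_mul_monomial]
    refine Finset.sum_equiv (swapEquiv i j) (fun kk => swapEquiv_mem i j kk) ?_
    intro kk hkk
    rw [prod_if_two i j hij]
    simp only [swapEquiv, Equiv.coe_fn_mk]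
    simp only [eq_self_iff_true, if_true]
    rw [if_neg hij, scalar_sigma2 ω hωℓ hω0 hqℓ]
    congr 1
    · have h := E_swap ℓ m s q j i kk
      rw [Equiv.swap_comm j i] at h
      exact congrArg monomial (congrArg Finsupp.equivFunOnFinite.symm h)
    · rw [Function.comp_apply, Equiv.swap_apply_left]
      rw [show (∏ l ∈ Finset.univ.erase i,
          cbinom ((m : ℂ) + ((ℓ : ℂ) - q + s) / ℓ) ((kk ∘ ⇑(Equiv.swap i j)) l))
        = ∏ l ∈ Finset.univ.erase (Equiv.swap i j i),
          cbinom ((m : ℂ) + ((ℓ : ℂ) - q + s) / ℓ) (kk l) from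
        prod_erase_swap i j i (fun l => cbinom ((m : ℂ) + ((ℓ : ℂ) - q + s) / ℓ) (kk l)),
        Equiv.swap_apply_left]
      ring
  · -- σ f_k = f_k
    rw [hfunσ, fjPoly, map_sum]
    simp only [aeval_monomial_scale_perm]
    refine Finset.sum_equiv (swapEquiv i j) (fun kk => swapEquiv_mem i j kk) ?_
    intro kk hkk
    rw [prod_if_two i j hij]
    simp only [swapEquiv, Equiv.coe_fn_mk]
    rw [if_neg (Ne.symm hki), if_neg (Ne.symm hkj), scalar_sigma3 ω hωℓ hω0, mul_one]
    congr 1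
    · exact congrArg monomial (congrArg Finsupp.equivFunOnFinite.symm (E_swap_k ℓ m s q i j k hki hkj kk))
    · rw [Function.comp_apply, Equiv.swap_apply_of_ne_of_ne hki hkj]
      rw [show (∏ l ∈ Finset.univ.erase k,
          cbinom ((m : ℂ) + ((ℓ : ℂ) - q + s) / ℓ) ((kk ∘ ⇑(Equiv.swap i j)) l))
        = ∏ l ∈ Finset.univ.erase (Equiv.swap i j k),
          cbinom ((m : ℂ) + ((ℓ : ℂ) - q + s) / ℓ) (kk l) from
        prod_erase_swap i j k (fun l => cbinom ((m : ℂ) + ((ℓ : ℂ) - q + s) / ℓ) (kk l)),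
        Equiv.swap_apply_of_ne_of_ne hki hkj]
  · -- s_i f_i = ω^{-s} f_i
    rw [hfunτ, fjPoly, map_sum, Finset.mul_sum]
    simp only [aeval_monomial_scale_perm, C_mul_monomial]
    refine Finset.sum_congr rfl fun kk hkk => ?_
    rw [prod_if_one i]
    simp only [eq_self_iff_true, if_true]
    rw [scalar_si_i ω hωℓ hω0]
    congr 1
    rw [mul_comm]
  · -- s_i f_k = ω^{q-s} f_k
    rw [hfunτ, fjPoly, map_sum, Finset.mul_sum]
    simp only [aeval_monomial_scale_perm, C_mul_monomial]
    refine Finset.sum_congr rfl fun kk hkk => ?_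
    rw [prod_if_one i]
    rw [if_neg (Ne.symm hki), scalar_si_k ω hωℓ hω0 hqℓ]
    congr 1
    rw [mul_comm]
end
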